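/- Let n ≥ 1, let F : ℝ → M_n(ℝ) be a function with values in the real n×n matrices, and suppose F has derivative F'(s₀) at the point s₀ (in the sense HasDerivAt). Then the map s ↦ exp(F(s)) (matrix exponential) has a derivative at s₀, given by d/ds exp(F(s))|_{s=s₀} = ∫₀¹ exp(t·F(s₀)) · F'(s₀) · exp((1−t)·F(s₀)) dt. -/

import Mathlib

/- STATEMENT 0: derivative of the matrix exponential along a differentiable
matrix-valued curve, as an integral formula (Duhamel's formula). -/

attribute [local instance] Matrix.linftyOpNormedAddCommGroup Matrix.linftyOpNormedRing
  Matrix.linftyOpNormedAlgebra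

namespace DuhamelAux

attribute [-instance] instTopologicalSpaceMatrix Matrix.instUniformSpace

open NormedSpace MeasureTheory intervalIntegral Asymptotics Filter

variable {N : Type*} [Fintype N] [DecidableEq N] [Nonempty N]

local notation "𝕄" => Matrix N N ℝ

instance : NormOneClass 𝕄 where
  norm_one := by
    rw [← Matrix.diagonal_one, Matrix.linfty_opNorm_diagonal]
    exact norm_one

lemma norm_exp_le (x : 𝕄) : ‖exp x‖ ≤ Real.exp ‖x‖ := by
  have hb : ∀ k : ℕ, ‖((k.factorial : ℝ))⁻¹ • x ^ k‖ ≤ ‖x‖ ^ k / k.factorial := by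
    intro k
    rw [norm_smul, norm_inv, Real.norm_natCast, div_eq_inv_mul]
    gcongr
    exact norm_pow_le x k
  have hs : Summable fun k : ℕ => ‖x‖ ^ k / k.factorial := Real.summable_pow_div_factorial _
  have hs' : Summable fun k : ℕ => ‖((k.factorial : ℝ))⁻¹ • x ^ k‖ :=
    Summable.of_nonneg_of_le (fun k => norm_nonneg _) hb hs
  calc ‖exp x‖ = ‖∑' k : ℕ, ((k.factorial : ℝ))⁻¹ • x ^ k‖ := by rw [exp_eq_tsum ℝ]
    _ ≤ ∑' k : ℕ, ‖((k.factorial : ℝ))⁻¹ • x ^ k‖ := norm_tsum_le_tsum_norm hs'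
    _ ≤ ∑' k : ℕ, ‖x‖ ^ k / k.factorial := Summable.tsum_le_tsum hb hs' hs
    _ = Real.exp ‖x‖ := by rw [Real.exp_eq_exp_ℝ, exp_eq_tsum_div]

lemma cont_exp_smul (M : 𝕄) : Continuous fun t : ℝ => exp (t • M) :=
  exp_continuous.comp (continuous_id.smul continuous_const)

lemma cont_exp_one_sub_smul (M : 𝕄) : Continuous fun t : ℝ => exp ((1 - t) • M) :=
  exp_continuous.comp ((continuous_const.sub continuous_id).smul continuous_const)

lemma duhamel (A B : 𝕄) :
    exp (A + B) - exp A
      = ∫ t in (0:ℝ)..1, exp (t • (A + B)) * B * exp ((1 - t) • A) := by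
  have key : ∀ t : ℝ, HasDerivAt (fun u : ℝ => exp (u • (A + B)) * exp ((1 - u) • A))
      (exp (t • (A + B)) * B * exp ((1 - t) • A)) t := by
    intro t
    have h1 : HasDerivAt (fun u : ℝ => exp (u • (A + B)))
        (exp (t • (A + B)) * (A + B)) t := hasDerivAt_exp_smul_const (𝕂 := ℝ) _ t
    have h2 : HasDerivAt (fun u : ℝ => exp ((1 - u) • A))
        (-(A * exp ((1 - t) • A))) t := by
      have h3 : HasDerivAt (fun u : ℝ => exp (u • A)) (A * exp ((1 - t) • A)) (1 - t) :=
        hasDerivAt_exp_smul_const' (𝕂 := ℝ) _ (1 - t)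
      have h4 : HasDerivAt (fun u : ℝ => 1 - u) (-1) t := by
        simpa using (hasDerivAt_id t).const_sub 1
      have := h3.scomp t h4
      simpa [neg_smul, Function.comp_def] using this
    have h5 := h1.mul h2
    convert h5 using 1
    case e'_4 => rfl
    case e'_5 => rfl
    noncomm_ring
    case e'_9 => noncomm_ring
  have hint : IntervalIntegrable
      (fun t : ℝ => exp (t • (A + B)) * B * exp ((1 - t) • A)) volume 0 1 :=
    (((cont_exp_smul (A + B)).mul continuous_const).mul
      (cont_exp_one_sub_smul A)).intervalIntegrable _ _
  have := integral_eq_sub_of_hasDerivAt (f := fun u : ℝ =>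
      exp (u • (A + B)) * exp ((1 - u) • A)) (fun t _ => key t) hint
  rw [this]
  simp [exp_zero]

lemma norm_integral_exp_mul_exp_le (P X Q : 𝕄) :
    ‖∫ t in (0:ℝ)..1, exp (t • P) * X * exp ((1 - t) • Q)‖
      ≤ Real.exp ‖P‖ * ‖X‖ * Real.exp ‖Q‖ := by
  have h := intervalIntegral.norm_integral_le_of_norm_le_const
    (C := Real.exp ‖P‖ * ‖X‖ * Real.exp ‖Q‖)
    (f := fun t : ℝ => exp (t • P) * X * exp ((1 - t) • Q)) (a := 0) (b := 1) ?_
  · simpa using h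
  · intro t ht
    rw [Set.uIoc_of_le (by norm_num : (0:ℝ) ≤ 1)] at ht
    obtain ⟨ht0, ht1⟩ := ht
    calc ‖exp (t • P) * X * exp ((1 - t) • Q)‖
        ≤ ‖exp (t • P) * X‖ * ‖exp ((1 - t) • Q)‖ := norm_mul_le _ _
      _ ≤ ‖exp (t • P)‖ * ‖X‖ * ‖exp ((1 - t) • Q)‖ := by
          gcongr; exact norm_mul_le _ _
      _ ≤ Real.exp ‖P‖ * ‖X‖ * Real.exp ‖Q‖ := by
          gcongr
          · calc ‖exp (t • P)‖ ≤ Real.exp ‖t • P‖ := norm_exp_le _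
              _ ≤ Real.exp ‖P‖ := by
                  apply Real.exp_le_exp.2
                  rw [norm_smul, Real.norm_eq_abs, abs_of_pos ht0]
                  nlinarith [norm_nonneg P]
          · calc ‖exp ((1 - t) • Q)‖ ≤ Real.exp ‖(1 - t) • Q‖ := norm_exp_le _
              _ ≤ Real.exp ‖Q‖ := by
                  apply Real.exp_le_exp.2
                  rw [norm_smul, Real.norm_eq_abs, abs_of_nonneg (by linarith)]
                  nlinarith [norm_nonneg Q]

lemma norm_exp_sub_exp_le (A B : 𝕄) :
    ‖exp (A + B) - exp A‖ ≤ Real.exp ‖A + B‖ * ‖B‖ * Real.exp ‖A‖ := by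
  rw [duhamel]
  exact norm_integral_exp_mul_exp_le (A + B) B A

end DuhamelAux

open Topology NormedSpace MeasureTheory intervalIntegral Asymptotics Filter DuhamelAux in
theorem deriv_matrix_exp {n : ℕ} (hn : 1 ≤ n)
    (F : ℝ → Matrix (Fin n) (Fin n) ℝ) (F' : Matrix (Fin n) (Fin n) ℝ) (s₀ : ℝ)
    (hF : HasDerivAt F F' s₀) :
    HasDerivAt (fun s => NormedSpace.exp (F s))
      (∫ t in (0:ℝ)..1,
        NormedSpace.exp (t • F s₀) * F' * NormedSpace.exp ((1 - t) • F s₀)) s₀ := by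
  haveI : Nonempty (Fin n) := ⟨⟨0, hn⟩⟩
  letI : TopologicalSpace (Matrix (Fin n) (Fin n) ℝ) :=
    PseudoMetricSpace.toUniformSpace.toTopologicalSpace
  set A := F s₀ with hA
  set I := ∫ t in (0:ℝ)..1, exp (t • A) * F' * exp ((1 - t) • A) with hI
  have cont3 : ∀ P X Q : Matrix (Fin n) (Fin n) ℝ,
      Continuous fun t : ℝ => exp (t • P) * X * exp ((1 - t) • Q) :=
    fun P X Q => ((cont_exp_smul P).mul continuous_const).mul (cont_exp_one_sub_smul Q)
  suffices h : (fun s => exp (F s) - exp A - (s - s₀) • I) =o[𝓝 s₀] fun s => s - s₀ by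
    refine hasDerivAt_iff_isLittleO.mpr ?_
    exact h
  have key : ∀ s : ℝ, exp (F s) - exp A - (s - s₀) • I
      = (∫ t in (0:ℝ)..1, (exp (t • F s) - exp (t • A)) * (F s - A) * exp ((1 - t) • A))
        + (∫ t in (0:ℝ)..1,
            exp (t • A) * ((F s - A) - (s - s₀) • F') * exp ((1 - t) • A)) := by
    intro s
    have h1 : exp (F s) - exp A
        = ∫ t in (0:ℝ)..1, exp (t • F s) * (F s - A) * exp ((1 - t) • A) := by
      have := duhamel A (F s - A)
      rwa [add_sub_cancel] at this
    have h2 : (s - s₀) • I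
        = ∫ t in (0:ℝ)..1, exp (t • A) * ((s - s₀) • F') * exp ((1 - t) • A) := by
      rw [hI, ← intervalIntegral.integral_smul]
      congr 1
      funext t
      simp only [mul_smul_comm, smul_mul_assoc]
    have hi1 : IntervalIntegrable (fun t : ℝ =>
        (exp (t • F s) - exp (t • A)) * (F s - A) * exp ((1 - t) • A)) volume 0 1 :=
      ((((cont_exp_smul (F s)).sub (cont_exp_smul A)).mul continuous_const).mul
        (cont_exp_one_sub_smul A)).intervalIntegrable _ _
    have hi2 : IntervalIntegrable (fun t : ℝ =>
        exp (t • A) * ((F s - A) - (s - s₀) • F') * exp ((1 - t) • A)) volume 0 1 :=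
      (cont3 A _ A).intervalIntegrable _ _
    rw [h1, h2, ← intervalIntegral.integral_sub ((cont3 (F s) _ A).intervalIntegrable _ _)
      ((cont3 A _ A).intervalIntegrable _ _), ← intervalIntegral.integral_add hi1 hi2]
    congr 1
    funext t
    simp only [sub_mul, mul_sub]
    abel
  have hΔ0 : Filter.Tendsto (fun s => F s - A) (𝓝 s₀) (𝓝 0) := by
    have h := hF.continuousAt.tendsto.sub (tendsto_const_nhds (x := A))
    simpa [hA] using h
  have hΔO : (fun s => F s - A) =O[𝓝 s₀] fun s => s - s₀ := hF.hasFDerivAt.isBigO_sub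
  have hlo : (fun s => (F s - A) - (s - s₀) • F') =o[𝓝 s₀] fun s => s - s₀ :=
    hasDerivAt_iff_isLittleO.mp hF
  have hE₂ : (fun s => ∫ t in (0:ℝ)..1,
      exp (t • A) * ((F s - A) - (s - s₀) • F') * exp ((1 - t) • A))
      =o[𝓝 s₀] fun s => s - s₀ := by
    refine IsBigO.trans_isLittleO ?_ hlo
    refine IsBigO.of_bound (Real.exp ‖A‖ * Real.exp ‖A‖) ?_
    filter_upwards with s
    calc ‖∫ t in (0:ℝ)..1,
          exp (t • A) * ((F s - A) - (s - s₀) • F') * exp ((1 - t) • A)‖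
        ≤ Real.exp ‖A‖ * ‖(F s - A) - (s - s₀) • F'‖ * Real.exp ‖A‖ :=
          norm_integral_exp_mul_exp_le A _ A
      _ = Real.exp ‖A‖ * Real.exp ‖A‖ * ‖(F s - A) - (s - s₀) • F'‖ := by ring
  have hev : ∀ᶠ s in 𝓝 s₀, ‖F s - A‖ ≤ 1 := by
    have h := hΔ0.norm
    rw [norm_zero] at h
    exact (h.eventually (gt_mem_nhds one_pos)).mono fun s hs => hs.le
  have hE₁O : (fun s => ∫ t in (0:ℝ)..1,
      (exp (t • F s) - exp (t • A)) * (F s - A) * exp ((1 - t) • A))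
      =O[𝓝 s₀] fun s => ‖F s - A‖ * ‖F s - A‖ := by
    refine IsBigO.of_bound (Real.exp (‖A‖ + 1) * Real.exp ‖A‖ * Real.exp ‖A‖) ?_
    filter_upwards [hev] with s hs
    rw [Real.norm_of_nonneg (mul_nonneg (norm_nonneg _) (norm_nonneg _))]
    have hb := intervalIntegral.norm_integral_le_of_norm_le_const
      (C := Real.exp (‖A‖ + 1) * ‖F s - A‖ * Real.exp ‖A‖ * ‖F s - A‖ * Real.exp ‖A‖)
      (f := fun t : ℝ => (exp (t • F s) - exp (t • A)) * (F s - A) * exp ((1 - t) • A))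
      (a := 0) (b := 1) ?_
    · calc ‖∫ t in (0:ℝ)..1,
            (exp (t • F s) - exp (t • A)) * (F s - A) * exp ((1 - t) • A)‖
          ≤ Real.exp (‖A‖ + 1) * ‖F s - A‖ * Real.exp ‖A‖ * ‖F s - A‖ * Real.exp ‖A‖ := by
            simpa using hb
        _ = Real.exp (‖A‖ + 1) * Real.exp ‖A‖ * Real.exp ‖A‖ * (‖F s - A‖ * ‖F s - A‖) := by
            ring
    · intro t ht
      rw [Set.uIoc_of_le (by norm_num : (0:ℝ) ≤ 1)] at ht
      obtain ⟨ht0, ht1⟩ := ht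
      have hsplit : t • F s = t • A + t • (F s - A) := by
        rw [← smul_add, add_sub_cancel]
      have e2exp : ‖exp ((1 - t) • A)‖ ≤ Real.exp ‖A‖ := by
        calc ‖exp ((1 - t) • A)‖ ≤ Real.exp ‖(1 - t) • A‖ := norm_exp_le _
          _ ≤ Real.exp ‖A‖ := by
              apply Real.exp_le_exp.2
              rw [norm_smul, Real.norm_eq_abs, abs_of_nonneg (by linarith)]
              nlinarith [norm_nonneg A]
      have hdiff : ‖exp (t • F s) - exp (t • A)‖
          ≤ Real.exp (‖A‖ + 1) * ‖F s - A‖ * Real.exp ‖A‖ := by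
        have e1 : ‖t • A + t • (F s - A)‖ ≤ ‖A‖ + 1 := by
          calc ‖t • A + t • (F s - A)‖ ≤ ‖t • A‖ + ‖t • (F s - A)‖ := norm_add_le _ _
            _ ≤ ‖A‖ + 1 := by
                rw [norm_smul, norm_smul, Real.norm_eq_abs, abs_of_pos ht0]
                nlinarith [norm_nonneg A, norm_nonneg (F s - A)]
        have e2 : ‖t • (F s - A)‖ ≤ ‖F s - A‖ := by
          rw [norm_smul, Real.norm_eq_abs, abs_of_pos ht0]
          nlinarith [norm_nonneg (F s - A)]
        have e3 : ‖t • A‖ ≤ ‖A‖ := by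
          rw [norm_smul, Real.norm_eq_abs, abs_of_pos ht0]
          nlinarith [norm_nonneg A]
        calc ‖exp (t • F s) - exp (t • A)‖
            = ‖exp (t • A + t • (F s - A)) - exp (t • A)‖ := by rw [← hsplit]
          _ ≤ Real.exp ‖t • A + t • (F s - A)‖ * ‖t • (F s - A)‖ * Real.exp ‖t • A‖ :=
              norm_exp_sub_exp_le _ _
          _ ≤ Real.exp (‖A‖ + 1) * ‖F s - A‖ * Real.exp ‖A‖ := by
              gcongr
      calc ‖(exp (t • F s) - exp (t • A)) * (F s - A) * exp ((1 - t) • A)‖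
          ≤ ‖(exp (t • F s) - exp (t • A)) * (F s - A)‖ * ‖exp ((1 - t) • A)‖ :=
            norm_mul_le _ _
        _ ≤ ‖exp (t • F s) - exp (t • A)‖ * ‖F s - A‖ * ‖exp ((1 - t) • A)‖ := by
            gcongr; exact norm_mul_le _ _
        _ ≤ Real.exp (‖A‖ + 1) * ‖F s - A‖ * Real.exp ‖A‖ * ‖F s - A‖ * Real.exp ‖A‖ := by
            gcongr
  have hsq : (fun s => ‖F s - A‖ * ‖F s - A‖) =o[𝓝 s₀] fun s => s - s₀ := by
    have h1 : (fun s => ‖F s - A‖) =O[𝓝 s₀] fun s => s - s₀ := hΔO.norm_left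
    have h2 : (fun s => ‖F s - A‖) =o[𝓝 s₀] fun _ : ℝ => (1 : ℝ) := by
      rw [isLittleO_one_iff]
      simpa using hΔ0.norm
    simpa using h1.mul_isLittleO h2
  have hE₁ := hE₁O.trans_isLittleO hsq
  exact (hE₁.add hE₂).congr' (Filter.Eventually.of_forall fun s => (key s).symm)
    Filter.EventuallyEq.rfl
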